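/- arXiv:1508.07257 — 2 statements merged into one kernel-verified Lean document; each statement's English description precedes it below -/
import Mathlib

section
/- The automorphism group of the augmented cube graph AQ_3 is isomorphic to the semidirect product (D_8 × D_8) ⋊ C_2, where the nontrivial element of C_2 acts on D_8 × D_8 by swapping the two coordinates. -/
/-- The standard basis vector `e_j` of `𝔽₂ⁿ`. -/
def stdBasis (n : ℕ) (j : Fin n) : Fin n → ZMod 2 := fun i => if i = j then 1 else 0

/-- The vector `v_k` of `𝔽₂ⁿ` having `1` in its last `k` coordinates and `0` elsewhere. -/
def lastOnes (n k : ℕ) : Fin n → ZMod 2 := fun i => if n - k ≤ i.val then 1 else 0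

/-- The generating set `S_n` of the augmented cube. -/
def genSet (n : ℕ) : Set (Fin n → ZMod 2) :=
  {x | (∃ j : Fin n, x = stdBasis n j) ∨ ∃ k : ℕ, 2 ≤ k ∧ k ≤ n ∧ x = lastOnes n k}

/-- The augmented cube graph `AQ_n`. -/
def AQ (n : ℕ) : SimpleGraph (Fin n → ZMod 2) where
  Adj x y := x ≠ y ∧ x + y ∈ genSet n
  symm := ⟨fun x y h => ⟨h.1.symm, by rw [add_comm]; exact h.2⟩⟩
  loopless := ⟨fun x h => h.1 rfl⟩

/-- The dihedral group of order 8. -/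
abbrev D8 := DihedralGroup 4

/-- The swap automorphism of `D_8 × D_8`, sending `(a, b)` to `(b, a)`. -/
def swapAut : MulAut (D8 × D8) := (MulEquiv.prodComm : D8 × D8 ≃* D8 × D8)

/-- The action of `C_2` on `D_8 × D_8` in which the nontrivial element swaps
the two coordinates. -/
def swapφ : Multiplicative (ZMod 2) →* MulAut (D8 × D8) where
  toFun c := if c.toAdd = 0 then 1 else swapAut
  map_one' := rfl
  map_mul' := by
    intro x y
    induction x using Multiplicative.rec with | _ x =>
    induction y using Multiplicative.rec with | _ y =>
    have h : ∀ z : ZMod 2, z = 0 ∨ z = 1 := by decide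
    rcases h x with rfl | rfl <;> rcases h y with rfl | rfl <;>
      · ext p <;>
          simp [swapAut, MulAut.mul_def, MulEquiv.prodComm,
            (by decide : (1 + 1 : ZMod 2) = 0)]


-- ===== auxiliary development =====
abbrev V3 := Fin 3 → ZMod 2
def AdjP (x y : V3) : Prop :=
  x ≠ y ∧ (x + y = stdBasis 3 0 ∨ x + y = stdBasis 3 1 ∨ x + y = stdBasis 3 2 ∨
    x + y = lastOnes 3 2 ∨ x + y = lastOnes 3 3)
instance (x y : V3) : Decidable (AdjP x y) := by unfold AdjP; infer_instance
lemma adj_AQ3 (x y : V3) : (AQ 3).Adj x y ↔ AdjP x y := by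
  unfold AQ AdjP genSet
  show (x ≠ y ∧ _) ↔ _
  constructor
  · rintro ⟨hne, h⟩
    refine ⟨hne, ?_⟩
    rcases h with ⟨j, hj⟩ | ⟨k, h2, h3, hk⟩
    · fin_cases j <;> tauto
    · interval_cases k <;> tauto
  · rintro ⟨hne, h⟩
    refine ⟨hne, ?_⟩
    rcases h with h|h|h|h|h
    · exact Or.inl ⟨0, h⟩
    · exact Or.inl ⟨1, h⟩
    · exact Or.inl ⟨2, h⟩
    · exact Or.inr ⟨2, by norm_num, by norm_num, h⟩
    · exact Or.inr ⟨3, by norm_num, by norm_num, h⟩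

abbrev W := ZMod 2 × ZMod 4
def lab : W → V3 := fun p =>
  if p.1 = 0 then
    (if p.2 = 0 then ![0,0,0] else if p.2 = 1 then ![1,1,0] else if p.2 = 2 then ![0,1,1] else ![1,0,1])
  else
    (if p.2 = 0 then ![1,0,0] else if p.2 = 1 then ![0,1,0] else if p.2 = 2 then ![1,1,1] else ![0,0,1])
def labInv : V3 → W := fun x =>
  if x = ![0,0,0] then (0,0) else if x = ![1,1,0] then (0,1) else if x = ![0,1,1] then (0,2)
  else if x = ![1,0,1] then (0,3) else if x = ![1,0,0] then (1,0) else if x = ![0,1,0] then (1,1)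
  else if x = ![1,1,1] then (1,2) else (1,3)
def L : W ≃ V3 := ⟨lab, labInv, by decide, by decide⟩

def Hw : SimpleGraph W where
  Adj u v := u ≠ v ∧ (u.1 ≠ v.1 ∨ v.2 = u.2 + 2)
  symm := ⟨fun u v h => by revert h; revert u v; decide⟩
  loopless := ⟨fun u h => by revert h; revert u; decide⟩

instance : DecidableRel Hw.Adj := fun u v => by
  unfold Hw; exact instDecidableAnd

def e3 : AQ 3 ≃g Hw := ⟨L.symm, by
  intro a b
  show Hw.Adj (L.symm a) (L.symm b) ↔ _
  rw [adj_AQ3]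
  revert a b
  decide⟩

def dAct : D8 → ZMod 4 → ZMod 4
  | .r a, j => a + j
  | .sr a, j => -a - j
lemma dAct_li : ∀ (d : D8) (j : ZMod 4), dAct d⁻¹ (dAct d j) = j := by decide
lemma dAct_ri : ∀ (d : D8) (j : ZMod 4), dAct d (dAct d⁻¹ j) = j := by decide
def dPerm (d : D8) : Equiv.Perm (ZMod 4) := ⟨dAct d, dAct d⁻¹, dAct_li d, dAct_ri d⟩
def pick (n : D8 × D8) (i : ZMod 2) : D8 := if i = 0 then n.1 else n.2
abbrev SDP := (D8 × D8) ⋊[swapφ] Multiplicative (ZMod 2)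
def Fperm (g : SDP) : Equiv.Perm W :=
  Equiv.prodShear (Equiv.addLeft g.right.toAdd)
    (fun i => dPerm (pick g.left (g.right.toAdd + i)))

set_option maxHeartbeats 1600000 in
lemma hAdjF : ∀ (d0 d1 : D8) (c : Multiplicative (ZMod 2)) (u v : W),
    Hw.Adj (Fperm ⟨(d0,d1),c⟩ u) (Fperm ⟨(d0,d1),c⟩ v) ↔ Hw.Adj u v := by decide

lemma Fperm_apply (n : D8 × D8) (c : Multiplicative (ZMod 2)) (i : ZMod 2) (j : ZMod 4) :
    Fperm ⟨n, c⟩ (i, j) = (c.toAdd + i, dAct (pick n (c.toAdd + i)) j) := rfl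
lemma pick_mul (a b : D8 × D8) (k : ZMod 2) : pick (a*b) k = pick a k * pick b k := by
  unfold pick; split <;> rfl
lemma pick_swap : ∀ (c : Multiplicative (ZMod 2)) (m : D8 × D8) (k : ZMod 2),
    pick ((swapφ c) m) k = pick m (c.toAdd + k) := by decide
lemma dAct_mul : ∀ (d e : D8) (j : ZMod 4), dAct (d*e) j = dAct d (dAct e j) := by decide
lemma self_add : ∀ (a x : ZMod 2), a + (a + x) = x := by decide
lemma Fperm_mul (n m : D8 × D8) (c c' : Multiplicative (ZMod 2)) (w : W) :
    Fperm ⟨n * (swapφ c) m, c * c'⟩ w = Fperm ⟨n, c⟩ (Fperm ⟨m, c'⟩ w) := by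
  obtain ⟨i, j⟩ := w
  simp only [Fperm_apply, toAdd_mul, pick_mul, pick_swap, dAct_mul, add_assoc, self_add]

def Φ : SDP →* (Hw ≃g Hw) where
  toFun g := ⟨Fperm g, by
    obtain ⟨⟨d0, d1⟩, c⟩ := g
    exact fun {a b} => hAdjF d0 d1 c a b⟩
  map_one' := by
    apply RelIso.ext
    intro w
    show Fperm 1 w = w
    revert w; decide
  map_mul' := by
    intro g h
    apply RelIso.ext
    intro w
    show Fperm (g * h) w = Fperm g (Fperm h w)
    obtain ⟨n, c⟩ := g
    obtain ⟨m, c'⟩ := h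
    exact Fperm_mul n m c c' w

set_option maxHeartbeats 1600000 in
lemma Fperm_inj : ∀ (d0 d1 : D8) (c : Multiplicative (ZMod 2)) (e0 e1 : D8)
    (c' : Multiplicative (ZMod 2)),
    (∀ w : W, Fperm ⟨(d0,d1),c⟩ w = Fperm ⟨(e0,e1),c'⟩ w) →
      d0 = e0 ∧ d1 = e1 ∧ c = c' := by decide

lemma Φ_inj : Function.Injective Φ := by
  intro g h hgh
  have hpt : ∀ w : W, Fperm g w = Fperm h w := fun w => DFunLike.congr_fun hgh w
  obtain ⟨⟨d0, d1⟩, c⟩ := g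
  obtain ⟨⟨e0, e1⟩, c'⟩ := h
  obtain ⟨h1, h2, h3⟩ := Fperm_inj d0 d1 c e0 e1 c' hpt
  subst h1; subst h2; subst h3; rfl

lemma rigid (f : Hw ≃g Hw) (h00 : f (0,0) = (0,0)) (h01 : f (0,1) = (0,1))
    (h10 : f (1,0) = (1,0)) (h11 : f (1,1) = (1,1)) : ∀ w, f w = w := by
  have inj : Function.Injective f := f.injective
  have k1 : ∀ v : W, ¬Hw.Adj (0,1) v → v ≠ (0,1) → v ≠ (0,0) → v = (0,2) := by decide
  have k2 : ∀ v : W, ¬Hw.Adj (0,0) v → v ≠ (0,0) → v ≠ (0,1) → v = (0,3) := by decide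
  have k3 : ∀ v : W, ¬Hw.Adj (1,1) v → v ≠ (1,1) → v ≠ (1,0) → v = (1,2) := by decide
  have k4 : ∀ v : W, ¬Hw.Adj (1,0) v → v ≠ (1,0) → v ≠ (1,1) → v = (1,3) := by decide
  have h02 : f (0,2) = (0,2) := by
    refine k1 _ (fun hAdj => ?_) (fun hv => ?_) (fun hv => ?_)
    · rw [← h01] at hAdj
      exact (by decide : ¬ Hw.Adj ((0:ZMod 2),(1:ZMod 4)) (0,2)) (f.map_rel_iff.mp hAdj)
    · rw [← h01] at hv; exact (by decide : ((0:ZMod 2),(2:ZMod 4)) ≠ (0,1)) (inj hv)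
    · rw [← h00] at hv; exact (by decide : ((0:ZMod 2),(2:ZMod 4)) ≠ (0,0)) (inj hv)
  have h03 : f (0,3) = (0,3) := by
    refine k2 _ (fun hAdj => ?_) (fun hv => ?_) (fun hv => ?_)
    · rw [← h00] at hAdj
      exact (by decide : ¬ Hw.Adj ((0:ZMod 2),(0:ZMod 4)) (0,3)) (f.map_rel_iff.mp hAdj)
    · rw [← h00] at hv; exact (by decide : ((0:ZMod 2),(3:ZMod 4)) ≠ (0,0)) (inj hv)
    · rw [← h01] at hv; exact (by decide : ((0:ZMod 2),(3:ZMod 4)) ≠ (0,1)) (inj hv)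
  have h12 : f (1,2) = (1,2) := by
    refine k3 _ (fun hAdj => ?_) (fun hv => ?_) (fun hv => ?_)
    · rw [← h11] at hAdj
      exact (by decide : ¬ Hw.Adj ((1:ZMod 2),(1:ZMod 4)) (1,2)) (f.map_rel_iff.mp hAdj)
    · rw [← h11] at hv; exact (by decide : ((1:ZMod 2),(2:ZMod 4)) ≠ (1,1)) (inj hv)
    · rw [← h10] at hv; exact (by decide : ((1:ZMod 2),(2:ZMod 4)) ≠ (1,0)) (inj hv)
  have h13 : f (1,3) = (1,3) := by
    refine k4 _ (fun hAdj => ?_) (fun hv => ?_) (fun hv => ?_)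
    · rw [← h10] at hAdj
      exact (by decide : ¬ Hw.Adj ((1:ZMod 2),(0:ZMod 4)) (1,3)) (f.map_rel_iff.mp hAdj)
    · rw [← h10] at hv; exact (by decide : ((1:ZMod 2),(3:ZMod 4)) ≠ (1,0)) (inj hv)
    · rw [← h11] at hv; exact (by decide : ((1:ZMod 2),(3:ZMod 4)) ≠ (1,1)) (inj hv)
  intro w
  fin_cases w <;> first
    | exact h00 | exact h01 | exact h02 | exact h03
    | exact h10 | exact h11 | exact h12 | exact h13

set_option synthInstance.maxHeartbeats 2000000 in
set_option synthInstance.maxSize 2000 in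
set_option maxHeartbeats 8000000 in
lemma exists_g : ∀ p q r s : W, p ≠ q → r ≠ s → ¬Hw.Adj p q → ¬Hw.Adj r s →
    Hw.Adj p r → Hw.Adj p s → Hw.Adj q r → Hw.Adj q s →
    ∃ (d0 d1 : D8) (c : Multiplicative (ZMod 2)),
      Fperm ⟨(d0,d1),c⟩ (0,0) = p ∧ Fperm ⟨(d0,d1),c⟩ (0,1) = q ∧
      Fperm ⟨(d0,d1),c⟩ (1,0) = r ∧ Fperm ⟨(d0,d1),c⟩ (1,1) = s := by decide

lemma Φ_coe (g : SDP) : ⇑(Φ g) = Fperm g := rfl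

lemma Φ_surj : Function.Surjective Φ := by
  intro f
  have adj_iff : ∀ a b : W, Hw.Adj (f a) (f b) ↔ Hw.Adj a b := fun a b => f.map_rel_iff
  have inj : Function.Injective f := f.injective
  obtain ⟨d0, d1, c, h1, h2, h3, h4⟩ :=
    exists_g (f (0,0)) (f (0,1)) (f (1,0)) (f (1,1))
      (fun h => (by decide : ((0,0) : W) ≠ (0,1)) (inj h))
      (fun h => (by decide : ((1,0) : W) ≠ (1,1)) (inj h))
      (fun h => (by decide : ¬ Hw.Adj ((0:ZMod 2),(0:ZMod 4)) (0,1)) ((adj_iff _ _).mp h))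
      (fun h => (by decide : ¬ Hw.Adj ((1:ZMod 2),(0:ZMod 4)) (1,1)) ((adj_iff _ _).mp h))
      ((adj_iff _ _).mpr (by decide))
      ((adj_iff _ _).mpr (by decide))
      ((adj_iff _ _).mpr (by decide))
      ((adj_iff _ _).mpr (by decide))
  set g : SDP := ⟨(d0,d1),c⟩ with hg
  have hk : ∀ w, ((Φ g)⁻¹ * f) w = w := by
    apply rigid
    · show (Φ g).symm (f (0,0)) = (0,0)
      rw [show f (0,0) = (Φ g) (0,0) from h1.symm]
      exact (Φ g).symm_apply_apply _
    · show (Φ g).symm (f (0,1)) = (0,1)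
      rw [show f (0,1) = (Φ g) (0,1) from h2.symm]
      exact (Φ g).symm_apply_apply _
    · show (Φ g).symm (f (1,0)) = (1,0)
      rw [show f (1,0) = (Φ g) (1,0) from h3.symm]
      exact (Φ g).symm_apply_apply _
    · show (Φ g).symm (f (1,1)) = (1,1)
      rw [show f (1,1) = (Φ g) (1,1) from h4.symm]
      exact (Φ g).symm_apply_apply _
  have e1 : (Φ g)⁻¹ * f = 1 := RelIso.ext fun w => hk w
  exact ⟨g, (inv_mul_eq_one.mp e1)⟩

def autCongr : (AQ 3 ≃g AQ 3) ≃* (Hw ≃g Hw) where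
  toFun f := (e3.symm.trans f).trans e3
  invFun f := (e3.trans f).trans e3.symm
  left_inv f := RelIso.ext fun x => by
    show e3.symm (e3 (f (e3.symm (e3 x)))) = f x
    simp
  right_inv f := RelIso.ext fun x => by
    show e3 (e3.symm (f (e3 (e3.symm x)))) = f x
    simp
  map_mul' f g := RelIso.ext fun x => by
    show e3 ((f * g) (e3.symm x)) = e3 (f (e3.symm (e3 (g (e3.symm x)))))
    simp

theorem aut_AQ3_iso_D8xD8_rtimes_C2 :
    Nonempty ((AQ 3 ≃g AQ 3) ≃* (D8 × D8) ⋊[swapφ] Multiplicative (ZMod 2)) :=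
  ⟨autCongr.trans (MulEquiv.ofBijective Φ ⟨Φ_inj, Φ_surj⟩).symm⟩
end

section
/- Let S ⊆ 𝔽₂ⁿ with 0 ∉ S, let X be the Cayley graph of 𝔽₂ⁿ with respect to S, let G = Aut(X), and let G_0 be the stabilizer of 0 in G. If H is a subgroup of G with G_0 ≤ H, then there exists an additive subgroup K of 𝔽₂ⁿ with g(K) = K for every g ∈ G_0, such that H = { f ∈ Aut(X) : there exist z ∈ K and g ∈ G_0 with f(x) = g(x + z) for all x }. -/
/-- The Cayley graph of `𝔽₂ⁿ` with respect to a subset `S`: distinct vertices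
`x` and `y` are adjacent iff `x + y ∈ S`. -/
def Cay (n : ℕ) (S : Set (Fin n → ZMod 2)) : SimpleGraph (Fin n → ZMod 2) where
  Adj x y := x ≠ y ∧ x + y ∈ S
  symm := ⟨fun x y h => ⟨h.1.symm, by rw [add_comm]; exact h.2⟩⟩
  loopless := ⟨fun x h => h.1 rfl⟩

lemma addself (n : ℕ) (z : Fin n → ZMod 2) : z + z = 0 :=
  funext fun i => CharTwo.add_self_eq_zero (z i)

/-- Translation by `z` as an automorphism of the Cayley graph. -/
def tr (n : ℕ) (S : Set (Fin n → ZMod 2)) (z : Fin n → ZMod 2) : Cay n S ≃g Cay n S where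
  toEquiv := Equiv.addRight z
  map_rel_iff' := by
    intro a b
    show ((a + z ≠ b + z) ∧ (a + z) + (b + z) ∈ S) ↔ (a ≠ b ∧ a + b ∈ S)
    have h1 : (a + z) + (b + z) = a + b := by
      have : (a + z) + (b + z) = (a + b) + (z + z) := by abel
      rw [this, addself, add_zero]
    rw [h1]
    constructor
    · rintro ⟨h, hs⟩
      exact ⟨fun he => h (by rw [he]), hs⟩
    · rintro ⟨h, hs⟩
      exact ⟨fun he => h (add_right_cancel he), hs⟩

lemma tr_apply (n : ℕ) (S : Set (Fin n → ZMod 2)) (z x : Fin n → ZMod 2) :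
    tr n S z x = x + z := rfl

lemma inv_zero_aux (n : ℕ) (S : Set (Fin n → ZMod 2)) (g : Cay n S ≃g Cay n S)
    (hg : g 0 = 0) : g⁻¹ 0 = 0 := by
  show g.symm 0 = 0
  have h := g.symm_apply_apply 0
  rw [hg] at h
  exact h

lemma cay_mul_apply (n : ℕ) (S : Set (Fin n → ZMod 2)) (f g : Cay n S ≃g Cay n S)
    (x : Fin n → ZMod 2) : (f * g) x = f (g x) := rfl

/-- If `H` is a subgroup of `Aut(Cay(𝔽₂ⁿ, S))` containing the stabilizer `G₀`
of the zero vertex, then `H = R(K)·G₀` for some additive subgroup `K` of `𝔽₂ⁿ`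
invariant under `G₀`. -/
theorem subgroup_containing_stabilizer_eq_RK_G0 (n : ℕ) (S : Set (Fin n → ZMod 2))
    (hS : (0 : Fin n → ZMod 2) ∉ S)
    (H : Subgroup (Cay n S ≃g Cay n S))
    (hH : ∀ g : Cay n S ≃g Cay n S, g 0 = 0 → g ∈ H) :
    ∃ K : AddSubgroup (Fin n → ZMod 2),
      (∀ g : Cay n S ≃g Cay n S, g 0 = 0 → ⇑g '' (K : Set (Fin n → ZMod 2)) = K) ∧
      (H : Set (Cay n S ≃g Cay n S)) =
        {f | ∃ z ∈ K, ∃ g : Cay n S ≃g Cay n S, g 0 = 0 ∧ ∀ x, f x = g (x + z)} := by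
  -- key: membership in H of a translation is equivalent to being a value f 0 with f ∈ H
  have key : ∀ z : Fin n → ZMod 2, tr n S z ∈ H ↔ ∃ f ∈ H, f 0 = z := by
    intro z
    constructor
    · intro h
      exact ⟨tr n S z, h, by rw [tr_apply, zero_add]⟩
    · rintro ⟨f, hf, hfz⟩
      have hg : (tr n S z * f) ∈ H := by
        apply hH
        rw [cay_mul_apply, hfz, tr_apply, addself]
      have : tr n S z = (tr n S z * f) * f⁻¹ := by
        rw [mul_assoc, mul_inv_cancel, mul_one]
      rw [this]
      exact H.mul_mem hg (H.inv_mem hf)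
  refine ⟨{ carrier := {z | tr n S z ∈ H}
            zero_mem' := ?_
            add_mem' := ?_
            neg_mem' := ?_ }, ?_, ?_⟩
  · intro a b ha hb
    have : tr n S (a + b) = tr n S b * tr n S a := by
      apply RelIso.ext
      intro x
      rw [cay_mul_apply, tr_apply, tr_apply, tr_apply, add_assoc]
    show tr n S (a + b) ∈ H
    rw [this]; exact H.mul_mem hb ha
  · apply hH; rw [tr_apply, add_zero]
  · intro a ha
    have : -a = a := by
      rw [neg_eq_iff_add_eq_zero, addself]
    show tr n S (-a) ∈ H
    rw [this]; exact ha
  · -- invariance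
    intro g hg
    have hmem : ∀ g : Cay n S ≃g Cay n S, g 0 = 0 → ∀ z, tr n S z ∈ H → tr n S (g z) ∈ H := by
      intro g hg z hz
      rw [key]
      refine ⟨g * tr n S z * g⁻¹, ?_, ?_⟩
      · exact H.mul_mem (H.mul_mem (hH g hg) hz) (H.inv_mem (hH g hg))
      · rw [cay_mul_apply, cay_mul_apply, inv_zero_aux n S g hg, tr_apply, zero_add]
    apply Set.eq_of_subset_of_subset
    · rintro _ ⟨z, hz, rfl⟩
      exact hmem g hg z hz
    · intro z hz
      refine ⟨g⁻¹ z, hmem g⁻¹ (inv_zero_aux n S g hg) z hz, g.apply_symm_apply z⟩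
  · -- set equality
    ext f
    simp only [SetLike.mem_coe, Set.mem_setOf_eq]
    constructor
    · intro hf
      refine ⟨f⁻¹ 0, ?_, f * tr n S (f⁻¹ 0), ?_, ?_⟩
      · show tr n S (f⁻¹ 0) ∈ H
        rw [key]
        exact ⟨f⁻¹, H.inv_mem hf, rfl⟩
      · rw [cay_mul_apply, tr_apply, zero_add]
        exact f.apply_symm_apply 0
      · intro x
        rw [cay_mul_apply, tr_apply]
        congr 1
        rw [add_assoc, addself, add_zero]
    · rintro ⟨z, hz, g, hg0, hfx⟩
      have : f = g * tr n S z := by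
        apply RelIso.ext
        intro x
        rw [cay_mul_apply, tr_apply]
        exact hfx x
      rw [this]
      exact H.mul_mem (hH g hg0) hz
end
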